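/- Fix a constant c > 0, let n be sufficiently large, and suppose d₀ := c·√(log n) is an integer. Let w be a uniformly random binary word of length n. Let t₀ be the smallest integer t with 4^t ≥ log n and t₁ the largest integer t with 4^t ≤ √n. For integers t and j ≥ 0, let E_{t,≥j} be the event |w[1,4^t]|₁ ≥ 2^(2t−1) + 2^t·d₀ + j, let E_t = E_{t,≥0}, let E_{≤t} = E_{t₀} ∩ E_{t₀+1} ∩ … ∩ E_t (with E_{≤t₀−1} the full event), and let β_t = exp(−2^(3−t)·d₀/3). Then for all t ∈ [t₀, t₁] and all integers j ≥ 0: P(E_{≤t−1} ∩ E_{t,≥j}) ≤ n^(−2c²(t−t₀+1)/3) · β_t^j / (1 − β_t). -/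

import Mathlib

/-- Number of ones of the infinite binary word `w` in the 0-indexed
half-open interval of positions `[a, b)`. Thus `cnt w 0 k` is the number
of 1s in the prefix of length `k` (i.e. `|w[1,k]|₁`). -/
def cnt (w : ℕ → Bool) (a b : ℕ) : ℕ :=
  ((Finset.Ico a b).filter (fun i => w i = true)).card

/-- Extend a binary word of length `n` to an infinite word by `false`s. -/
def ext {n : ℕ} (w : Fin n → Bool) : ℕ → Bool :=
  fun i => if h : i < n then w ⟨i, h⟩ else false

/-- `β_t = exp(-2^(3-t) d₀ / 3)`. -/
noncomputable def beta (t d0 : ℕ) : ℝ :=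
  Real.exp (-(8 * (d0 : ℝ) / (2 : ℝ) ^ t) / 3)

namespace PNF

/-- number of ones of a finite word -/
def onesF {m : ℕ} (u : Fin m → Bool) : ℕ := ∑ i, if u i = true then 1 else 0

lemma cnt_eq_sum (f : ℕ → Bool) (m : ℕ) :
    cnt f 0 m = ∑ i ∈ Finset.range m, if f i = true then 1 else 0 := by
  rw [cnt, Finset.card_filter, Finset.range_eq_Ico]

lemma cnt_congr {f g : ℕ → Bool} {m : ℕ} (h : ∀ i < m, f i = g i) :
    cnt f 0 m = cnt g 0 m := by
  rw [cnt_eq_sum, cnt_eq_sum]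
  exact Finset.sum_congr rfl fun i hi => by rw [h i (Finset.mem_range.1 hi)]

lemma cnt_ext_fin {m : ℕ} (w : Fin m → Bool) : cnt (ext w) 0 m = onesF w := by
  rw [cnt_eq_sum, onesF, Finset.sum_range fun i => if (ext w) i = true then 1 else 0]
  refine Finset.sum_congr rfl fun i _ => ?_
  simp [ext, i.2]

lemma onesF_le {m : ℕ} (u : Fin m → Bool) : onesF u ≤ m := by
  calc onesF u ≤ ∑ _i : Fin m, 1 := Finset.sum_le_sum fun i _ => by split <;> omega
  _ = m := by simp

/-- split equivalence -/
def splitEquiv (a b : ℕ) : (Fin (a + b) → Bool) ≃ (Fin a → Bool) × (Fin b → Bool) :=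
  (Equiv.arrowCongr (finSumFinEquiv (m := a) (n := b)).symm (Equiv.refl Bool)).trans
    (Equiv.sumArrowEquivProdArrow _ _ _)

lemma splitEquiv_fst (a b : ℕ) (w : Fin (a + b) → Bool) (i : Fin a) :
    (splitEquiv a b w).1 i = w (Fin.castAdd b i) := by
  simp [splitEquiv, Equiv.sumArrowEquivProdArrow]

lemma splitEquiv_snd (a b : ℕ) (w : Fin (a + b) → Bool) (i : Fin b) :
    (splitEquiv a b w).2 i = w (Fin.natAdd a i) := by
  simp [splitEquiv, Equiv.sumArrowEquivProdArrow]

lemma onesF_split (a b : ℕ) (w : Fin (a + b) → Bool) :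
    onesF w = onesF (splitEquiv a b w).1 + onesF (splitEquiv a b w).2 := by
  rw [onesF, ← Fintype.sum_equiv (finSumFinEquiv (m := a) (n := b))
    (fun x => if w (finSumFinEquiv x) = true then 1 else 0)
    (fun i => if w i = true then 1 else 0) (fun x => rfl)]
  rw [Fintype.sum_sum_type, onesF, onesF]
  simp [splitEquiv_fst, splitEquiv_snd]
  rw [Finset.card_filter, Finset.card_filter]
  congr 1 <;> (apply Finset.sum_congr rfl; intro _ _; congr)

lemma ext_agree_prefix (a b : ℕ) (w : Fin (a + b) → Bool) (i : ℕ) (hi : i < a) :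
    ext ((splitEquiv a b w).1) i = ext w i := by
  have h2 : i < a + b := by omega
  simp only [ext, dif_pos hi, dif_pos h2, splitEquiv_fst]
  rfl

lemma cnt_ext_prefix (a b k : ℕ) (hk : k ≤ a) (w : Fin (a + b) → Bool) :
    cnt (ext w) 0 k = cnt (ext ((splitEquiv a b w).1)) 0 k :=
  cnt_congr fun i hi => (ext_agree_prefix a b w i (lt_of_lt_of_le hi hk)).symm


lemma ncard_filter {α : Type*} [Fintype α] (p : α → Prop) [DecidablePred p] :
    {x | p x}.ncard = (Finset.univ.filter p).card := by
  rw [← Set.ncard_coe_finset]; congr 1; ext x; simp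

lemma sum_exp_ones (b : ℕ) (lam : ℝ) :
    ∑ v : Fin b → Bool, Real.exp (lam * (∑ i, if v i = true then (1:ℕ) else 0)) =
      (1 + Real.exp lam) ^ b := by
  have h : ∀ v : Fin b → Bool, Real.exp (lam * (∑ i, if v i = true then (1:ℕ) else 0))
      = ∏ i : Fin b, (if v i = true then Real.exp lam else 1) := by
    intro v
    rw [Nat.cast_sum, Finset.mul_sum, Real.exp_sum]
    refine Finset.prod_congr rfl fun i _ => ?_
    split <;> simp
  simp_rw [h]
  rw [← Fintype.piFinset_univ, ← Finset.prod_univ_sum (fun _ : Fin b => (Finset.univ : Finset Bool))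
    (fun _ y => if y = true then Real.exp lam else 1)]
  simp [add_comm]

lemma geo_le (r : ℝ) (h0 : 0 ≤ r) (h1 : r < 1) (n : ℕ) :
    ∑ i ∈ Finset.range n, r ^ i ≤ 1 / (1 - r) := by
  have hs := summable_geometric_of_lt_one h0 h1
  calc ∑ i ∈ Finset.range n, r ^ i ≤ ∑' i, r ^ i :=
        Summable.sum_le_tsum (Finset.range n) (fun i _ => pow_nonneg h0 i) hs
  _ = (1 - r)⁻¹ := tsum_geometric_of_lt_one h0 h1
  _ = 1 / (1 - r) := (one_div _).symm

end PNF
namespace PNF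
open Finset

lemma one_add_exp_le (x : ℝ) : 1 + Real.exp x ≤ 2 * Real.exp (x/2 + x^2/8) := by
  have h := Real.cosh_le_exp_half_sq (x/2)
  rw [Real.cosh_eq] at h
  have e1 : (0:ℝ) < Real.exp (x/2) := Real.exp_pos _
  have key : (Real.exp (x/2) + Real.exp (-(x/2))) * Real.exp (x/2) = Real.exp x + 1 := by
    rw [add_mul, ← Real.exp_add, ← Real.exp_add]
    norm_num
  have h3 : Real.exp ((x/2)^2/2) * Real.exp (x/2) = Real.exp (x/2 + x^2/8) := by
    rw [← Real.exp_add]; ring_nf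
  nlinarith [h, e1, key, h3]

lemma tail_le (b K : ℕ) (lam : ℝ) (hl : 0 ≤ lam) :
    ((Finset.univ.filter fun v : Fin b → Bool => K ≤ onesF v).card : ℝ)
      ≤ (1 + Real.exp lam) ^ b * Real.exp (-(lam * K)) := by
  classical
  have h1 : ((Finset.univ.filter fun v : Fin b → Bool => K ≤ onesF v).card : ℝ)
      ≤ ∑ v : Fin b → Bool, Real.exp (lam * ((onesF v : ℝ) - K)) := by
    calc ((Finset.univ.filter fun v : Fin b → Bool => K ≤ onesF v).card : ℝ)
        = ∑ _v ∈ Finset.univ.filter fun v : Fin b → Bool => K ≤ onesF v, (1:ℝ) := by simp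
      _ ≤ ∑ v ∈ Finset.univ.filter fun v : Fin b → Bool => K ≤ onesF v,
            Real.exp (lam * ((onesF v : ℝ) - K)) := by
          refine Finset.sum_le_sum fun v hv => ?_
          have h2 : (K:ℝ) ≤ onesF v := by exact_mod_cast (Finset.mem_filter.1 hv).2
          have : (0:ℝ) ≤ lam * ((onesF v : ℝ) - K) := mul_nonneg hl (by linarith)
          simpa using Real.exp_le_exp.2 this
      _ ≤ ∑ v : Fin b → Bool, Real.exp (lam * ((onesF v : ℝ) - K)) :=
          Finset.sum_le_sum_of_subset_of_nonneg (Finset.filter_subset _ _)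
            (fun v _ _ => (Real.exp_pos _).le)
  have h2 : ∀ v : Fin b → Bool, Real.exp (lam * ((onesF v : ℝ) - K))
      = Real.exp (lam * (onesF v : ℝ)) * Real.exp (-(lam * K)) := fun v => by
    rw [← Real.exp_add]; ring_nf
  simp_rw [h2] at h1
  rw [← Finset.sum_mul] at h1
  calc ((Finset.univ.filter fun v : Fin b → Bool => K ≤ onesF v).card : ℝ)
      ≤ (∑ v : Fin b → Bool, Real.exp (lam * (onesF v : ℝ))) * Real.exp (-(lam * K)) := h1
    _ = (1 + Real.exp lam) ^ b * Real.exp (-(lam * K)) := by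
        rw [← sum_exp_ones b lam]; rfl

end PNF

namespace PNF
open Finset

lemma trunc_mgf (a : ℕ) (S : Finset (Fin a → Bool)) (base : ℕ) (lam : ℝ) (hl : 0 ≤ lam)
    (B bm : ℝ) (hB : 0 ≤ B) (hbm0 : 0 ≤ bm) (hbm1 : Real.exp lam * bm < 1)
    (hS : ∀ u ∈ S, base ≤ onesF u)
    (hC : ∀ i : ℕ, ((S.filter fun u => base + i ≤ onesF u).card : ℝ) ≤ B * bm ^ i) :
    ∑ u ∈ S, Real.exp (lam * ((onesF u : ℝ) - base))
      ≤ B * (1 + (Real.exp lam - 1) * bm / (1 - Real.exp lam * bm)) := by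
  classical
  set f : ℕ → ℝ := fun i => Real.exp (lam * i) with hf
  have step1 : ∀ u ∈ S, Real.exp (lam * ((onesF u : ℝ) - base))
      = 1 + ∑ i ∈ Finset.range a, (if base + i + 1 ≤ onesF u then f (i+1) - f i else 0) := by
    intro u hu
    have hz : base ≤ onesF u := hS u hu
    have h1 : (onesF u : ℝ) - base = ((onesF u - base : ℕ) : ℝ) := by
      rw [Nat.cast_sub hz]
    rw [h1]
    have h2 : Real.exp (lam * ((onesF u - base : ℕ) : ℝ))
        = 1 + ∑ i ∈ Finset.range (onesF u - base), (f (i+1) - f i) := by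
      rw [Finset.sum_range_sub f (onesF u - base)]
      simp [hf]
    rw [h2]
    congr 1
    rw [← Finset.sum_filter]
    apply Finset.sum_congr _ (fun _ _ => rfl)
    ext i
    simp only [Finset.mem_filter, Finset.mem_range]
    have hza : onesF u - base ≤ a := le_trans (Nat.sub_le _ _) (onesF_le u)
    omega
  rw [Finset.sum_congr rfl step1, Finset.sum_add_distrib]
  rw [Finset.sum_comm]
  have inner : ∀ i ∈ Finset.range a,
      (∑ u ∈ S, if base + i + 1 ≤ onesF u then f (i+1) - f i else 0)
        ≤ (f (i+1) - f i) * (B * bm ^ (i+1)) := by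
    intro i _
    have hfi : 0 ≤ f (i+1) - f i := by
      have : lam * i ≤ lam * (i+1) := by
        apply mul_le_mul_of_nonneg_left _ hl; linarith
      have := Real.exp_le_exp.2 this
      simp only [hf]; push_cast at this ⊢; linarith
    calc (∑ u ∈ S, if base + i + 1 ≤ onesF u then f (i+1) - f i else 0)
        = ∑ _u ∈ S.filter (fun u => base + (i+1) ≤ onesF u), (f (i+1) - f i) := by
          rw [Finset.sum_filter]
          exact Finset.sum_congr rfl fun u _ => by norm_num [add_assoc]
      _ = ((S.filter (fun u => base + (i+1) ≤ onesF u)).card : ℝ) * (f (i+1) - f i) := by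
          rw [Finset.sum_const, nsmul_eq_mul]
      _ ≤ (B * bm ^ (i+1)) * (f (i+1) - f i) :=
          mul_le_mul_of_nonneg_right (hC (i+1)) hfi
      _ = (f (i+1) - f i) * (B * bm ^ (i+1)) := by ring
  have card_le : ((S.card : ℝ)) ≤ B := by
    have := hC 0
    rw [Finset.filter_true_of_mem (fun u hu => by simpa using hS u hu)] at this
    simpa using this
  have geom : ∑ i ∈ Finset.range a, (f (i+1) - f i) * (B * bm ^ (i+1))
      ≤ B * ((Real.exp lam - 1) * bm / (1 - Real.exp lam * bm)) := by
    have hterm : ∀ i : ℕ, (f (i+1) - f i) * (B * bm ^ (i+1))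
        = B * ((Real.exp lam - 1) * bm) * (Real.exp lam * bm) ^ i := by
      intro i
      have hfe : ∀ k : ℕ, f k = (Real.exp lam) ^ k := fun k => by
        rw [hf, ← Real.exp_nat_mul, mul_comm]
      rw [hfe, hfe]
      rw [pow_succ, pow_succ, mul_pow]
      ring
    simp_rw [hterm]
    rw [← Finset.mul_sum]
    have h0 : (0:ℝ) ≤ Real.exp lam * bm := mul_nonneg (Real.exp_pos _).le hbm0
    have hgeo := geo_le (Real.exp lam * bm) h0 hbm1 a
    have hco : 0 ≤ B * ((Real.exp lam - 1) * bm) := by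
      have : (1:ℝ) ≤ Real.exp lam := by
        simpa using Real.exp_le_exp.2 hl
      apply mul_nonneg hB (mul_nonneg (by linarith) hbm0)
    calc B * ((Real.exp lam - 1) * bm) * (∑ i ∈ Finset.range a, (Real.exp lam * bm) ^ i)
        ≤ B * ((Real.exp lam - 1) * bm) * (1 / (1 - Real.exp lam * bm)) :=
          mul_le_mul_of_nonneg_left hgeo hco
      _ = B * ((Real.exp lam - 1) * bm / (1 - Real.exp lam * bm)) := by ring
  calc (∑ _u ∈ S, (1:ℝ)) +
        ∑ i ∈ Finset.range a, ∑ u ∈ S, (if base + i + 1 ≤ onesF u then f (i+1) - f i else 0)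
      ≤ B + B * ((Real.exp lam - 1) * bm / (1 - Real.exp lam * bm)) := by
        apply add_le_add
        · simpa using card_le
        · exact le_trans (Finset.sum_le_sum inner) geom
    _ = B * (1 + (Real.exp lam - 1) * bm / (1 - Real.exp lam * bm)) := by ring

end PNF

namespace PNF
open Finset

noncomputable def wN (m : ℕ) (Q : (ℕ → Bool) → Prop) : ℕ := {w : Fin m → Bool | Q (ext w)}.ncard

lemma wN_cast {m m' : ℕ} (h : m = m') (Q : (ℕ → Bool) → Prop) : wN m Q = wN m' Q := by
  subst h; rfl

lemma wN_eq_card (m : ℕ) (Q : (ℕ → Bool) → Prop)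
    [DecidablePred fun w : Fin m → Bool => Q (ext w)] :
    wN m Q = (Finset.univ.filter fun w : Fin m → Bool => Q (ext w)).card :=
  ncard_filter _

lemma wN_full (n L : ℕ) (hL : L ≤ n) (Q : (ℕ → Bool) → Prop)
    (hQ : ∀ f g : ℕ → Bool, (∀ i, i < L → f i = g i) → Q f → Q g) :
    wN n Q = 2 ^ (n - L) * wN L Q := by
  classical
  obtain ⟨k, rfl⟩ : ∃ k, n = L + k := ⟨n - L, by omega⟩
  have hk : L + k - L = k := by omega
  rw [hk, wN_eq_card, wN_eq_card]
  have key : ∀ w : Fin (L+k) → Bool, Q (ext w) ↔ Q (ext ((splitEquiv L k w).1)) := fun w =>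
    ⟨hQ _ _ (fun i hi => (ext_agree_prefix L k w i hi).symm),
     hQ _ _ (fun i hi => ext_agree_prefix L k w i hi)⟩
  rw [Finset.card_equiv (splitEquiv L k)
    (t := (Finset.univ.filter fun u : Fin L → Bool => Q (ext u)) ×ˢ Finset.univ)
    (fun w => by simp [key w])]
  rw [Finset.card_product, Finset.card_univ]
  have : Fintype.card (Fin k → Bool) = 2 ^ k := by simp
  rw [this, mul_comm]

def Qev (d0 t0 t j : ℕ) (f : ℕ → Bool) : Prop :=
  (∀ s : ℕ, t0 ≤ s → s < t → 2^(2*s-1) + 2^s*d0 ≤ cnt f 0 (4^s)) ∧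
  2^(2*t-1) + 2^t*d0 + j ≤ cnt f 0 (4^t)

noncomputable def RHS (d0 t0 t j : ℕ) : ℝ :=
  2^(4^t) * Real.exp (-(2*(d0:ℝ)^2*((t:ℝ)-(t0:ℝ)+1))/3) * (beta t d0)^j / (1 - beta t d0)

lemma beta_pos (t d0 : ℕ) : 0 < beta t d0 := Real.exp_pos _

lemma beta_lt_one (t d0 : ℕ) (hd : 1 ≤ d0) : beta t d0 < 1 := by
  rw [beta, ← Real.exp_zero]
  apply Real.exp_lt_exp.2
  have h1 : (0:ℝ) < (d0:ℝ) := by exact_mod_cast hd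
  have h2 : (0:ℝ) < (2:ℝ)^t := by positivity
  have : 0 < 8 * (d0:ℝ) / (2:ℝ)^t := by positivity
  linarith

lemma beta_sq (t d0 : ℕ) : beta t d0 = (beta (t+1) d0) ^ 2 := by
  rw [beta, beta, ← Real.exp_nat_mul]
  congr 1
  have h2 : ((2:ℝ)^(t+1)) = 2 * 2^t := by ring
  rw [h2]
  have h3 : (2:ℝ)^t ≠ 0 := by positivity
  field_simp
  ring

end PNF

namespace PNF
open Finset

lemma cast_pow4 (t : ℕ) : ((4^t : ℕ) : ℝ) = ((2:ℝ)^t)^2 := by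
  push_cast
  rw [show (4:ℝ) = 2^2 by norm_num, ← pow_mul, ← pow_mul, mul_comm]

lemma cast_pow2m1 (t : ℕ) (ht : 1 ≤ t) : ((2^(2*t-1) : ℕ) : ℝ) = ((2:ℝ)^t)^2 / 2 := by
  have h : 2*t-1+1 = 2*t := by omega
  have h2 : ((2:ℝ)^t)^2 = (2:ℝ)^(2*t-1) * 2 := by
    rw [← pow_mul, ← pow_succ, h, mul_comm t 2]
  push_cast
  rw [h2]
  ring

lemma base_case (d0 t0 j : ℕ) (hd : 1 ≤ d0) (ht0 : 1 ≤ t0) :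
    ((wN (4^t0) (Qev d0 t0 t0 j)) : ℝ) ≤ RHS d0 t0 t0 j := by
  classical
  set m := 4^t0 with hm0
  set K := 2^(2*t0-1) + 2^t0*d0 + j with hK
  have h1 : wN m (Qev d0 t0 t0 j) ≤ (univ.filter fun v : Fin m → Bool => K ≤ onesF v).card := by
    rw [wN_eq_card]
    apply Finset.card_le_card
    intro w hw
    simp only [Finset.mem_filter, Finset.mem_univ, true_and] at *
    have := hw.2
    rwa [cnt_ext_fin w] at this
  set lam := 4*(d0:ℝ)/2^t0 with hlam
  have hd0 : (0:ℝ) ≤ (d0:ℝ) := Nat.cast_nonneg _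
  have hl : 0 ≤ lam := by positivity
  have h2 := tail_le m K lam hl
  have h3 : (1 + Real.exp lam)^m ≤ 2^m * Real.exp (m*(lam/2 + lam^2/8)) := by
    calc (1+Real.exp lam)^m ≤ (2*Real.exp (lam/2+lam^2/8))^m :=
          pow_le_pow_left₀ (by positivity) (one_add_exp_le lam) m
    _ = 2^m * Real.exp (m*(lam/2+lam^2/8)) := by
        rw [mul_pow, ← Real.exp_nat_mul, mul_comm (m:ℝ)]
  set T := (2:ℝ)^t0 with hT
  have hT0 : 0 < T := by positivity
  have hmc : ((m:ℕ):ℝ) = T^2 := cast_pow4 t0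
  have hKc : ((K:ℕ):ℝ) = T^2/2 + T*(d0:ℝ) + j := by
    rw [hK]
    push_cast [cast_pow2m1 t0 ht0]
    push_cast
    ring
  have hexp : (m:ℝ)*(lam/2+lam^2/8) - lam*K = -(2*(d0:ℝ)^2) - lam*j := by
    rw [hmc, hKc, hlam]
    field_simp
    ring
  set β := beta t0 d0 with hβ
  have hb1 : β < 1 := beta_lt_one _ _ hd
  have hb0 : 0 < β := beta_pos _ _
  have hlamβ : Real.exp (-lam) ≤ β := by
    rw [hβ, beta]
    apply Real.exp_le_exp.2
    have hx : 0 ≤ (d0:ℝ)/T := div_nonneg hd0 hT0.le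
    have h4 : lam = 4*((d0:ℝ)/T) := by rw [hlam]; ring
    have h8 : (8*(d0:ℝ)/T) = 8*((d0:ℝ)/T) := by ring
    rw [h8, h4]
    linarith
  have hfin : 2^m * Real.exp (-(2*(d0:ℝ)^2) - lam*j) ≤ RHS d0 t0 t0 j := by
    rw [RHS, ← hβ]
    have e1 : Real.exp (-(2*(d0:ℝ)^2) - lam*j) = Real.exp (-(2*(d0:ℝ)^2)) * (Real.exp (-lam))^j := by
      rw [← Real.exp_nat_mul, ← Real.exp_add]
      ring_nf
    have e2 : Real.exp (-(2*(d0:ℝ)^2)) ≤ Real.exp (-(2*(d0:ℝ)^2*((t0:ℝ)-(t0:ℝ)+1))/3) := by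
      apply Real.exp_le_exp.2
      have := sq_nonneg (d0:ℝ)
      nlinarith
    have e3 : (Real.exp (-lam))^j ≤ β^j := pow_le_pow_left₀ (Real.exp_pos _).le hlamβ j
    have P0 : (0:ℝ) ≤ 2^m * Real.exp (-(2*(d0:ℝ)^2*((t0:ℝ)-(t0:ℝ)+1))/3) * β^j := by positivity
    rw [le_div_iff₀ (by linarith : (0:ℝ) < 1 - β)]
    have step : 2^m * Real.exp (-(2*(d0:ℝ)^2) - lam*j)
        ≤ 2^m * Real.exp (-(2*(d0:ℝ)^2*((t0:ℝ)-(t0:ℝ)+1))/3) * β^j := by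
      rw [e1, ← mul_assoc]
      apply mul_le_mul _ e3 (by positivity) (by positivity)
      exact mul_le_mul_of_nonneg_left e2 (by positivity)
    nlinarith [mul_nonneg P0 hb0.le]
  calc ((wN m (Qev d0 t0 t0 j)) : ℝ)
      ≤ ((univ.filter fun v : Fin m → Bool => K ≤ onesF v).card : ℝ) := by exact_mod_cast h1
    _ ≤ (1 + Real.exp lam)^m * Real.exp (-(lam * K)) := h2
    _ ≤ (2^m * Real.exp ((m:ℝ)*(lam/2+lam^2/8))) * Real.exp (-(lam * K)) :=
        mul_le_mul_of_nonneg_right h3 (Real.exp_pos _).le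
    _ = 2^m * Real.exp ((m:ℝ)*(lam/2+lam^2/8) - lam*K) := by
        rw [mul_assoc, ← Real.exp_add]
        ring_nf
    _ = 2^m * Real.exp (-(2*(d0:ℝ)^2) - lam*j) := by rw [hexp]
    _ ≤ RHS d0 t0 t0 j := hfin

end PNF

namespace PNF
open Finset

lemma step_case (d0 t0 t : ℕ) (hd : 1 ≤ d0) (ht0 : 1 ≤ t0) (ht : t0 ≤ t) (j : ℕ)
    (IH : ∀ i : ℕ, ((wN (4^t) (Qev d0 t0 t i)) : ℝ) ≤ RHS d0 t0 t i) :
    ((wN (4^(t+1)) (Qev d0 t0 (t+1) j)) : ℝ) ≤ RHS d0 t0 (t+1) j := by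
  classical
  have ht1 : 1 ≤ t := le_trans ht0 ht
  set a := 4^t with ha
  set b := 3*4^t with hb
  have hab : 4^(t+1) = a + b := by rw [pow_succ]; ring
  rw [wN_cast hab, wN_eq_card]
  set K := 2^(2*(t+1)-1) + 2^(t+1)*d0 + j with hK
  set base := 2^(2*t-1) + 2^t*d0 with hbase
  set lam := 8*(d0:ℝ)/(3*2^(t+1)) with hlam
  have hd0 : (0:ℝ) ≤ (d0:ℝ) := Nat.cast_nonneg _
  have hl : 0 ≤ lam := by positivity
  set p : (Fin a → Bool) → Prop :=
    fun u => ∀ s, t0 ≤ s → s < t+1 → 2^(2*s-1)+2^s*d0 ≤ cnt (ext u) 0 (4^s) with hp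
  set S := univ.filter p with hSdef
  set β := beta (t+1) d0 with hβ
  set βm := beta t d0 with hβm
  have hb0 : 0 < β := beta_pos _ _
  have hb1 : β < 1 := beta_lt_one _ _ hd
  have hbm0 : 0 < βm := beta_pos _ _
  have hbm1' : βm < 1 := beta_lt_one _ _ hd
  have hβlam : β = Real.exp (-lam) := by
    rw [hβ, beta, hlam]; congr 1; ring
  have hbmsq : βm = β^2 := beta_sq t d0
  have hexplamβm : Real.exp lam * βm = β := by
    rw [hbmsq, hβlam, ← Real.exp_nat_mul, ← Real.exp_add]
    congr 1; push_cast; ring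
  -- Step A: pointwise bound
  have hpoint : ∀ w : Fin (a+b) → Bool,
      ((if Qev d0 t0 (t+1) j (ext w) then (1:ℝ) else 0)) ≤
        (if p ((splitEquiv a b w).1) then (1:ℝ) else 0) *
          (Real.exp (lam * (((onesF (splitEquiv a b w).1 : ℝ)) - base)) *
           (Real.exp (lam * (((base:ℝ)) - K)) *
            Real.exp (lam * ((onesF (splitEquiv a b w).2 : ℝ))))) := by
    intro w
    by_cases hw : Qev d0 t0 (t+1) j (ext w)
    · obtain ⟨h1, h2⟩ := hw
      have hps : p ((splitEquiv a b w).1) := by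
        intro s hs1 hs2
        have h4s : 4^s ≤ a := by rw [ha]; exact Nat.pow_le_pow_right (by norm_num) (by omega)
        rw [← cnt_ext_prefix a b (4^s) h4s w]
        exact h1 s hs1 hs2
      rw [if_pos ⟨h1, h2⟩, if_pos hps, one_mul]
      have hcnt : cnt (ext w) 0 (4^(t+1))
          = onesF (splitEquiv a b w).1 + onesF (splitEquiv a b w).2 := by
        rw [show (4^(t+1) : ℕ) = a + b from hab, cnt_ext_fin w, onesF_split]
      rw [hcnt] at h2
      rw [← Real.exp_add, ← Real.exp_add]
      have hxy : (K:ℝ) ≤ (onesF (splitEquiv a b w).1 : ℝ) + (onesF (splitEquiv a b w).2 : ℝ) := by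
        have h2' : K ≤ onesF (splitEquiv a b w).1 + onesF (splitEquiv a b w).2 := h2
        exact_mod_cast h2'
      apply Real.one_le_exp
      nlinarith [mul_nonneg hl (sub_nonneg.2 hxy)]
    · rw [if_neg hw]; positivity
  have h1β : (0:ℝ) < 1 - β := by linarith
  have h1βm : (0:ℝ) < 1 - βm := by linarith
  have hcard : ((univ.filter fun w : Fin (a+b) → Bool => Qev d0 t0 (t+1) j (ext w)).card : ℝ)
      = ∑ w : Fin (a+b) → Bool, (if Qev d0 t0 (t+1) j (ext w) then (1:ℝ) else 0) := by
    rw [Finset.card_filter]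
    push_cast
    rfl
  have hsum1 : ∑ w : Fin (a+b) → Bool, (if Qev d0 t0 (t+1) j (ext w) then (1:ℝ) else 0)
      ≤ ∑ w : Fin (a+b) → Bool, ((if p ((splitEquiv a b w).1) then (1:ℝ) else 0) *
          (Real.exp (lam * (((onesF (splitEquiv a b w).1 : ℝ)) - base)) *
           (Real.exp (lam * (((base:ℝ)) - K)) *
            Real.exp (lam * ((onesF (splitEquiv a b w).2 : ℝ)))))) :=
    Finset.sum_le_sum fun w _ => hpoint w
  have hmg : ∑ v : Fin b → Bool, Real.exp (lam * (onesF v : ℝ)) = (1+Real.exp lam)^b := by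
    rw [← sum_exp_ones b lam]; rfl
  have hsum2 : ∑ w : Fin (a+b) → Bool, ((if p ((splitEquiv a b w).1) then (1:ℝ) else 0) *
          (Real.exp (lam * (((onesF (splitEquiv a b w).1 : ℝ)) - base)) *
           (Real.exp (lam * (((base:ℝ)) - K)) *
            Real.exp (lam * ((onesF (splitEquiv a b w).2 : ℝ))))))
      = (∑ u ∈ S, Real.exp (lam * ((onesF u : ℝ) - base))) *
          (Real.exp (lam * (((base:ℝ)) - K)) *
            ∑ v : Fin b → Bool, Real.exp (lam * (onesF v : ℝ))) := by
    calc ∑ w : Fin (a+b) → Bool, ((if p ((splitEquiv a b w).1) then (1:ℝ) else 0) *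
          (Real.exp (lam * (((onesF (splitEquiv a b w).1 : ℝ)) - base)) *
           (Real.exp (lam * (((base:ℝ)) - K)) *
            Real.exp (lam * ((onesF (splitEquiv a b w).2 : ℝ))))))
        = ∑ x : (Fin a → Bool) × (Fin b → Bool), ((if p x.1 then (1:ℝ) else 0) *
          (Real.exp (lam * (((onesF x.1 : ℝ)) - base)) *
           (Real.exp (lam * (((base:ℝ)) - K)) *
            Real.exp (lam * ((onesF x.2 : ℝ)))))) :=
          Fintype.sum_equiv (splitEquiv a b) _ _ (fun w => rfl)
      _ = ∑ u : Fin a → Bool, ∑ v : Fin b → Bool, ((if p u then (1:ℝ) else 0) *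
          (Real.exp (lam * (((onesF u : ℝ)) - base)) *
           (Real.exp (lam * (((base:ℝ)) - K)) *
            Real.exp (lam * ((onesF v : ℝ)))))) := Fintype.sum_prod_type _
      _ = ∑ u : Fin a → Bool, ((if p u then (1:ℝ) else 0) *
            Real.exp (lam * (((onesF u : ℝ)) - base))) *
           (Real.exp (lam * (((base:ℝ)) - K)) *
            ∑ v : Fin b → Bool, Real.exp (lam * ((onesF v : ℝ)))) := by
          refine Finset.sum_congr rfl fun u _ => ?_
          rw [Finset.mul_sum, Finset.mul_sum]
          refine Finset.sum_congr rfl fun v _ => ?_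
          ring
      _ = (∑ u ∈ S, Real.exp (lam * ((onesF u : ℝ) - base))) *
          (Real.exp (lam * (((base:ℝ)) - K)) *
            ∑ v : Fin b → Bool, Real.exp (lam * (onesF v : ℝ))) := by
          rw [← Finset.sum_mul, hSdef, Finset.sum_filter]
          congr 1
          refine Finset.sum_congr rfl fun u _ => ?_
          split <;> simp
  set Et := Real.exp (-(2*(d0:ℝ)^2*((t:ℝ)-(t0:ℝ)+1))/3) with hEt
  set B := 2^a * Et / (1-βm) with hB
  have hBnn : (0:ℝ) ≤ B := by
    apply div_nonneg (by positivity) (by linarith)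
  have hSS : ∀ u ∈ S, base ≤ onesF u := by
    intro u hu
    have hpu : p u := (Finset.mem_filter.1 hu).2
    have h5 := hpu t ht (by omega)
    rwa [← ha, cnt_ext_fin u] at h5
  have hCC : ∀ i : ℕ, ((S.filter fun u => base + i ≤ onesF u).card : ℝ) ≤ B * βm^i := by
    intro i
    have hfeq : (S.filter fun u => base + i ≤ onesF u)
        = univ.filter (fun u : Fin a → Bool => Qev d0 t0 t i (ext u)) := by
      rw [hSdef, Finset.filter_filter]
      apply Finset.filter_congr
      intro u _
      constructor
      · rintro ⟨hpu, hcnt⟩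
        refine ⟨fun s hs1 hs2 => hpu s hs1 (by omega), ?_⟩
        rw [← ha, cnt_ext_fin u]
        exact hcnt
      · rintro ⟨hq1, hq2⟩
        rw [← ha, cnt_ext_fin u] at hq2
        refine ⟨?_, hq2⟩
        intro s hs1 hs2
        rcases Nat.lt_or_ge s t with h|h
        · exact hq1 s hs1 h
        · have hst : s = t := by omega
          subst hst
          rw [← ha, cnt_ext_fin u]
          omega
    rw [hfeq, ← wN_eq_card]
    calc ((wN a (Qev d0 t0 t i)) : ℝ) ≤ RHS d0 t0 t i := IH i
      _ = B * βm^i := by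
          simp only [RHS, hB, hβm, hEt, ha]
          ring
  have htrunc := trunc_mgf a S base lam hl B βm hBnn hbm0.le
    (by rw [hexplamβm]; exact hb1) hSS hCC
  have helam : Real.exp lam = β⁻¹ := by
    rw [hβlam, Real.exp_neg, inv_inv]
  have hβne : β ≠ 0 := ne_of_gt hb0
  have h1βne : (1:ℝ) - β ≠ 0 := ne_of_gt h1β
  have h12 : (1:ℝ) - β^2 ≠ 0 := by nlinarith
  have hkey : B * (1 + (Real.exp lam - 1) * βm / (1 - Real.exp lam * βm)) = 2^a * Et / (1-β) := by
    rw [hexplamβm, helam, hB, hbmsq]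
    have inner : 1 + (β⁻¹ - 1)*β^2/(1-β) = (1-β^2)/(1-β) := by
      field_simp [hβne, h1βne]
      ring
    rw [inner]
    field_simp [h12, h1βne]
  have hhoef : (1 + Real.exp lam)^b ≤ 2^b * Real.exp (b*(lam/2 + lam^2/8)) := by
    calc (1+Real.exp lam)^b ≤ (2*Real.exp (lam/2+lam^2/8))^b :=
          pow_le_pow_left₀ (by positivity) (one_add_exp_le lam) b
      _ = _ := by rw [mul_pow, ← Real.exp_nat_mul, mul_comm (b:ℝ)]
  have hT0 : (0:ℝ) < (2:ℝ)^t := by positivity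
  have hbasec : ((base:ℕ):ℝ) = ((2:ℝ)^t)^2/2 + ((2:ℝ)^t)*(d0:ℝ) := by
    rw [hbase]
    push_cast [cast_pow2m1 t ht1]
    ring
  have hKc : ((K:ℕ):ℝ) = 2*((2:ℝ)^t)^2 + 2*((2:ℝ)^t)*(d0:ℝ) + j := by
    rw [hK]
    push_cast [cast_pow2m1 (t+1) (by omega : 1 ≤ t+1)]
    rw [pow_succ]
    ring
  have hbc : ((b:ℕ):ℝ) = 3*((2:ℝ)^t)^2 := by
    rw [hb]
    push_cast [cast_pow4]
    rw [show (4:ℝ) = 2^2 by norm_num, ← pow_mul, ← pow_mul, mul_comm t 2]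
  have hlamT : lam = 4*(d0:ℝ)/(3*(2:ℝ)^t) := by
    rw [hlam, pow_succ]
    ring
  have hexp2 : lam*(((base:ℕ):ℝ) - K) + (b:ℝ)*(lam/2+lam^2/8) = -(2*(d0:ℝ)^2)/3 - lam*j := by
    rw [hbasec, hKc, hbc, hlamT]
    field_simp
    ring
  have hfinal : (2^a*Et/(1-β)) * (Real.exp (lam*(((base:ℕ):ℝ)-K)) * (2^b * Real.exp (b*(lam/2+lam^2/8))))
      = RHS d0 t0 (t+1) j := by
    have e1 : Real.exp (lam*(((base:ℕ):ℝ)-K)) * Real.exp (b*(lam/2+lam^2/8))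
        = Real.exp (-(2*(d0:ℝ)^2)/3 - lam*j) := by
      rw [← Real.exp_add, hexp2]
    have e2 : β^j = Real.exp (-(lam*(j:ℝ))) := by
      rw [hβlam, ← Real.exp_nat_mul]
      congr 1
      ring
    have e3 : Et * Real.exp (-(2*(d0:ℝ)^2)/3 - lam*(j:ℝ))
        = Real.exp (-(2*(d0:ℝ)^2*((↑(t+1):ℝ)-(t0:ℝ)+1))/3) * Real.exp (-(lam*(j:ℝ))) := by
      rw [hEt, ← Real.exp_add, ← Real.exp_add]
      congr 1
      push_cast
      ring
    simp only [RHS]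
    rw [hab, pow_add, ← hβ]
    calc (2^a*Et/(1-β)) * (Real.exp (lam*(((base:ℕ):ℝ)-K)) * (2^b * Real.exp (b*(lam/2+lam^2/8))))
        = 2^a*2^b*(Et*(Real.exp (lam*(((base:ℕ):ℝ)-K)) * Real.exp (b*(lam/2+lam^2/8))))/(1-β) := by
          ring
      _ = 2^a*2^b*(Et*(Real.exp (-(2*(d0:ℝ)^2)/3 - lam*(j:ℝ))))/(1-β) := by rw [e1]
      _ = 2^a*2^b*(Real.exp (-(2*(d0:ℝ)^2*((↑(t+1):ℝ)-(t0:ℝ)+1))/3) * Real.exp (-(lam*(j:ℝ))))/(1-β) := by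
          rw [e3]
      _ = (2:ℝ)^a*2^b*Real.exp (-(2*(d0:ℝ)^2*((↑(t+1):ℝ)-(t0:ℝ)+1))/3) * β^j/(1-β) := by
          rw [e2]; ring
  calc ((univ.filter fun w : Fin (a+b) → Bool => Qev d0 t0 (t+1) j (ext w)).card : ℝ)
      = ∑ w : Fin (a+b) → Bool, (if Qev d0 t0 (t+1) j (ext w) then (1:ℝ) else 0) := hcard
    _ ≤ _ := hsum1
    _ = (∑ u ∈ S, Real.exp (lam * ((onesF u : ℝ) - base))) *
          (Real.exp (lam * (((base:ℝ)) - K)) * (1+Real.exp lam)^b) := by rw [hsum2, hmg]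
    _ ≤ (2^a*Et/(1-β)) * (Real.exp (lam * (((base:ℝ)) - K)) * (1+Real.exp lam)^b) := by
        apply mul_le_mul_of_nonneg_right (htrunc.trans (le_of_eq hkey))
        positivity
    _ ≤ (2^a*Et/(1-β)) * (Real.exp (lam*(((base:ℕ):ℝ)-K)) * (2^b * Real.exp (b*(lam/2+lam^2/8)))) := by
        apply mul_le_mul_of_nonneg_left
          (mul_le_mul_of_nonneg_left hhoef (Real.exp_pos _).le)
        apply div_nonneg (by positivity) (by linarith)
    _ = RHS d0 t0 (t+1) j := hfinal

end PNF

namespace PNF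
open Finset

lemma main_aux (d0 t0 : ℕ) (hd : 1 ≤ d0) (ht0 : 1 ≤ t0) :
    ∀ t, t0 ≤ t → ∀ j : ℕ,
      ((wN (4^t) (Qev d0 t0 t j)) : ℝ) ≤ RHS d0 t0 t j := by
  intro t ht
  induction t, ht using Nat.le_induction with
  | base => exact fun j => base_case d0 t0 j hd ht0
  | succ t ht IH => exact fun j => step_case d0 t0 t hd ht0 ht j IH

end PNF

open PNF

/-- Fix `c > 0`, let `n` be sufficiently large, and suppose
`d₀ = c √(log n)` is an integer. Let `w` be a uniformly random binary word of
length `n` (so probabilities are `#{favourable words} / 2^n`). Let `t₀` be the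
smallest integer `t` with `4^t ≥ log n` and `t₁` the largest integer `t` with
`4^t ≤ √n`. For `j ≥ 0` let `E_{t,≥j}` be the event
`|w[1,4^t]|₁ ≥ 2^(2t-1) + 2^t d₀ + j`, and let
`E_{≤ t-1} = E_{t₀,≥0} ∩ ⋯ ∩ E_{t-1,≥0}`. Then for all `t₀ ≤ t ≤ t₁` and all
`j ≥ 0`:
`P(E_{≤ t-1} ∩ E_{t,≥j}) ≤ n^(-2c²(t-t₀+1)/3) β_t^j / (1 - β_t)`,
where `β_t = exp(-2^(3-t) d₀ / 3)`. Logarithms are natural. -/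
theorem pnf_upper_bound_claim (c : ℝ) (hc : 0 < c) :
    ∃ N : ℕ, ∀ n : ℕ, N ≤ n →
      ∀ d0 : ℕ, (d0 : ℝ) = c * Real.sqrt (Real.log n) →
      ∀ t0 : ℕ, (Real.log n ≤ (4 : ℝ) ^ t0 ∧
          ∀ s : ℕ, s < t0 → (4 : ℝ) ^ s < Real.log n) →
      ∀ t1 : ℕ, ((4 : ℝ) ^ t1 ≤ Real.sqrt n ∧
          ∀ s : ℕ, (4 : ℝ) ^ s ≤ Real.sqrt n → s ≤ t1) →
      ∀ t : ℕ, t0 ≤ t → t ≤ t1 → ∀ j : ℕ,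
        (Set.ncard {w : Fin n → Bool |
            (∀ s : ℕ, t0 ≤ s → s < t →
              2 ^ (2 * s - 1) + 2 ^ s * d0 ≤ cnt (ext w) 0 (4 ^ s)) ∧
            2 ^ (2 * t - 1) + 2 ^ t * d0 + j ≤ cnt (ext w) 0 (4 ^ t)} : ℝ)
            / 2 ^ n ≤
          (n : ℝ) ^ (-(2 * c ^ 2 * ((t : ℝ) - (t0 : ℝ) + 1)) / 3) *
            (beta t d0) ^ j / (1 - beta t d0) := by
  refine ⟨3, fun n hn d0 hd0 t0 ht0h t1 ht1h t ht0t htt1 j => ?_⟩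
  obtain ⟨ht0a, _⟩ := ht0h
  obtain ⟨ht1a, _⟩ := ht1h
  have hn3 : (3:ℝ) ≤ (n:ℝ) := by exact_mod_cast hn
  have hn0 : (0:ℝ) < n := by linarith
  have hlog1 : 1 < Real.log n := by
    have h1 := Real.log_lt_log (Real.exp_pos 1) (lt_of_lt_of_le (by
      linarith [Real.exp_one_lt_d9]) hn3)
    rwa [Real.log_exp] at h1
  have hlogpos : 0 < Real.log n := by linarith
  have hd0sq : (d0:ℝ)^2 = c^2 * Real.log n := by
    rw [hd0, mul_pow, Real.sq_sqrt hlogpos.le]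
  have hdpos : 1 ≤ d0 := by
    have h2 : (0:ℝ) < (d0:ℝ) := by
      rw [hd0]
      exact mul_pos hc (Real.sqrt_pos.2 hlogpos)
    have : 0 < d0 := by exact_mod_cast h2
    omega
  have ht01 : 1 ≤ t0 := by
    rcases Nat.eq_zero_or_pos t0 with h|h
    · rw [h] at ht0a; norm_num at ht0a; linarith
    · exact h
  have h4tn : 4^t ≤ n := by
    have r1 : (4:ℝ)^t ≤ (4:ℝ)^t1 := pow_le_pow_right₀ (by norm_num) htt1
    have r2 : Real.sqrt n ≤ n := by
      have h1 : (n:ℝ) ≤ (n:ℝ)^2 := by nlinarith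
      calc Real.sqrt n ≤ Real.sqrt ((n:ℝ)^2) := Real.sqrt_le_sqrt h1
        _ = n := Real.sqrt_sq hn0.le
    have r3 : (4:ℝ)^t ≤ (n:ℝ) := le_trans r1 (le_trans ht1a r2)
    have r4 : ((4^t : ℕ) : ℝ) ≤ (n:ℝ) := by push_cast; exact r3
    exact_mod_cast r4
  have hQdep : ∀ f g : ℕ → Bool, (∀ i, i < 4^t → f i = g i) →
      Qev d0 t0 t j f → Qev d0 t0 t j g := by
    rintro f g hfg ⟨h1, h2⟩
    have hagree : ∀ k : ℕ, k ≤ 4^t → cnt g 0 k = cnt f 0 k := fun k hk =>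
      cnt_congr fun i hi => (hfg i (lt_of_lt_of_le hi hk)).symm
    constructor
    · intro s hs1 hs2
      rw [hagree (4^s) (Nat.pow_le_pow_right (by norm_num) (by omega))]
      exact h1 s hs1 hs2
    · rw [hagree (4^t) le_rfl]
      exact h2
  have hcount : {w : Fin n → Bool |
      (∀ s : ℕ, t0 ≤ s → s < t →
        2 ^ (2 * s - 1) + 2 ^ s * d0 ≤ cnt (ext w) 0 (4 ^ s)) ∧
      2 ^ (2 * t - 1) + 2 ^ t * d0 + j ≤ cnt (ext w) 0 (4 ^ t)}.ncard
      = wN n (Qev d0 t0 t j) := rfl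
  rw [hcount, wN_full n (4^t) h4tn (Qev d0 t0 t j) hQdep]
  have key := main_aux d0 t0 hdpos ht01 t ht0t j
  rw [RHS] at key
  set β := beta t d0 with hβ
  have hb0 : 0 < β := beta_pos _ _
  have hb1 : β < 1 := beta_lt_one _ _ hdpos
  have h1β : (0:ℝ) < 1 - β := by linarith
  have hE : Real.exp (-(2*(d0:ℝ)^2*((t:ℝ)-(t0:ℝ)+1))/3)
      = (n:ℝ) ^ (-(2 * c ^ 2 * ((t : ℝ) - (t0 : ℝ) + 1)) / 3) := by
    rw [Real.rpow_def_of_pos hn0]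
    congr 1
    rw [hd0sq]
    ring
  rw [← hE]
  set E := Real.exp (-(2*(d0:ℝ)^2*((t:ℝ)-(t0:ℝ)+1))/3) with hEd
  have hpow : (2:ℝ)^(n-4^t) * 2^(4^t) = 2^n := by
    rw [← pow_add]
    congr 1
    omega
  have h2n : (0:ℝ) < 2^n := by positivity
  have h24 : (0:ℝ) < 2^(4^t) := by positivity
  have hcast : ((2^(n-4^t) * wN (4^t) (Qev d0 t0 t j) : ℕ) : ℝ)
      = (2:ℝ)^(n-4^t) * (wN (4^t) (Qev d0 t0 t j) : ℝ) := by push_cast; ring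
  rw [hcast]
  set W := (wN (4^t) (Qev d0 t0 t j) : ℝ) with hW
  have heq : (2:ℝ)^(n-4^t) * W / 2^n = W / 2^(4^t) := by
    rw [← hpow, mul_div_mul_left W _ (ne_of_gt (by positivity : (0:ℝ) < (2:ℝ)^(n-4^t)))]
  rw [heq]
  calc W / 2^(4^t) ≤ (2^(4^t)*E*β^j/(1-β))/2^(4^t) := by gcongr
    _ = E*β^j/(1-β) := by field_simp
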